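/- Let (E, b, T) be an n-dimensional Hilbert–Poincaré complex over a unital C*-algebra A, let B = b + b* and let S be the operator defined by S(v) = i^{p(p-1)+l} T(v) for v in E_p (where n = 2l or 2l+1). Then S is self-adjoint, satisfies bS + Sb* = 0, and the self-adjoint operators B + S and B - S are invertible. -/

import Mathlib

/-!
Statement 0: For an `n`-dimensional Hilbert–Poincaré complex `(E, b, T)` over a unital
C*-algebra (modelled here on a complex Hilbert space, with the grading of the complex
recorded by a family of orthogonal projections `P p`), the operator `S` defined by
`S v = i^(p(p-1)+l) T v` on degree-`p` vectors (where `n = 2l` or `2l+1`) is self-adjoint,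
satisfies `b S + S b* = 0`, and the self-adjoint operators `B + S` and `B - S` are
invertible, where `B = b + b*`.
-/

noncomputable section

open ContinuousLinearMap

/-- A flat model of an `n`-dimensional Hilbert–Poincaré complex: the underlying Hilbert
module is the direct sum of the chain groups `E_0, …, E_n`, recorded by the grading
projections `P p`; `b` is the differential and `T` the Poincaré duality operator, which is
a chain homotopy equivalence from the dual complex `(E, b*)` to `(E, b)`. -/
structure HilbertPoincareComplex (n : ℕ) (H : Type*) [NormedAddCommGroup H]
    [InnerProductSpace ℂ H] [CompleteSpace H] where
  P : ℕ → H →L[ℂ] H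
  b : H →L[ℂ] H
  T : H →L[ℂ] H
  P_selfAdjoint : ∀ p, IsSelfAdjoint (P p)
  P_idem : ∀ p, P p ∘L P p = P p
  P_orth : ∀ p q, p ≠ q → P p ∘L P q = 0
  P_bounded : ∀ p, n < p → P p = 0
  P_total : ∑ p ∈ Finset.range (n + 1), P p = ContinuousLinearMap.id ℂ H
  b_deg : ∀ p, b ∘L P (p + 1) = P p ∘L (b ∘L P (p + 1))
  b_bot : b ∘L P 0 = 0
  b_sq : b ∘L b = 0
  T_deg : ∀ p, p ≤ n → T ∘L P p = P (n - p) ∘L (T ∘L P p)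
  T_adjoint : ∀ p, p ≤ n →
    (ContinuousLinearMap.adjoint T) ∘L P p = ((-1 : ℂ) ^ ((n - p) * p)) • (T ∘L P p)
  T_b : ∀ p, p ≤ n →
    (T ∘L ContinuousLinearMap.adjoint b) ∘L P p + ((-1 : ℂ) ^ p) • ((b ∘L T) ∘L P p) = 0
  T_equiv : ∃ T' h₁ h₂ : H →L[ℂ] H,
    T ∘L T' - ContinuousLinearMap.id ℂ H = b ∘L h₁ + h₁ ∘L b ∧
    T' ∘L T - ContinuousLinearMap.id ℂ H =
      (ContinuousLinearMap.adjoint b) ∘L h₂ + h₂ ∘L (ContinuousLinearMap.adjoint b)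

/-- The operator `S` of a Hilbert–Poincaré complex: `S v = i^(p(p-1)+l) T v` for `v` of
degree `p`, where `l = n / 2` (so that `n = 2l` or `n = 2l + 1`). -/
def dualityS {n : ℕ} {H : Type*} [NormedAddCommGroup H] [InnerProductSpace ℂ H]
    [CompleteSpace H] (Cx : HilbertPoincareComplex n H) : H →L[ℂ] H :=
  ∑ p ∈ Finset.range (n + 1), (Complex.I ^ (p * (p - 1) + n / 2)) • (Cx.T ∘L Cx.P p)


namespace HPCAux

lemma I_pow_congr {a b : ℕ} (h : a % 4 = b % 4) : Complex.I ^ a = Complex.I ^ b := by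
  conv_lhs => rw [← Nat.div_add_mod a 4]
  conv_rhs => rw [← Nat.div_add_mod b 4]
  rw [pow_add, pow_add, pow_mul, pow_mul, Complex.I_pow_four, one_pow, one_pow, h]

lemma cast_mul_pred (m : ℕ) : ((m * (m - 1) : ℕ) : ZMod 4) = (m : ZMod 4) * m - m := by
  cases m with
  | zero => simp
  | succ k =>
    push_cast [Nat.succ_sub_one]
    ring

lemma zmod4_key : ∀ J Q L R : ZMod 4, (R = 0 ∨ R = 1) → J + Q = 2 * L + R →
    3 * (Q * Q - Q + L) + 2 * (J * Q) = J * J - J + L := by decide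

lemma c_reflect (j q l r : ℕ) (hr : r < 2) (hn : j + q = 2 * l + r) :
    Complex.I ^ (3 * (q * (q - 1) + l) + 2 * (j * q)) = Complex.I ^ (j * (j - 1) + l) := by
  apply I_pow_congr
  have hcast : ((j + q : ℕ) : ZMod 4) = ((2 * l + r : ℕ) : ZMod 4) := by rw [hn]
  push_cast at hcast
  have hr' : ((r : ℕ) : ZMod 4) = 0 ∨ ((r : ℕ) : ZMod 4) = 1 := by
    interval_cases r
    · left; simp
    · right; simp
  have hqq : q * (q - 1) = q * q - q := by
    cases q with
    | zero => rfl
    | succ k => rw [Nat.succ_sub_one, Nat.mul_succ, Nat.add_sub_cancel]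
  have hjj : j * (j - 1) = j * j - j := by
    cases j with
    | zero => rfl
    | succ k => rw [Nat.succ_sub_one, Nat.mul_succ, Nat.add_sub_cancel]
  have hqle : q ≤ q * q := by nlinarith
  have hjle : j ≤ j * j := by nlinarith
  have h4 : ((3 * (q * (q - 1) + l) + 2 * (j * q) : ℕ) : ZMod 4)
      = ((j * (j - 1) + l : ℕ) : ZMod 4) := by
    rw [hqq, hjj]
    push_cast [Nat.cast_sub hqle, Nat.cast_sub hjle]
    linear_combination zmod4_key (j : ZMod 4) (q : ZMod 4) (l : ZMod 4) (r : ZMod 4) hr' hcast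
  exact (ZMod.natCast_eq_natCast_iff _ _ _).mp h4

lemma exp_succ_eq (l q : ℕ) : 2 * q + (q * (q - 1) + l) = (q + 1) * ((q + 1) - 1) + l := by
  cases q with
  | zero => simp
  | succ k =>
    simp only [Nat.add_sub_cancel, Nat.succ_sub_one]
    ring

end HPCAux

namespace HilbertPoincareComplex
variable {n : ℕ} {H : Type*} [NormedAddCommGroup H] [InnerProductSpace ℂ H] [CompleteSpace H]
  (Cx : HilbertPoincareComplex n H)

lemma mul_one' : (Cx.P_total : _) = Cx.P_total := rfl

lemma Pmul (p q : ℕ) : Cx.P p * Cx.P q = if p = q then Cx.P p else 0 := by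
  split_ifs with h
  · subst h; exact Cx.P_idem p
  · exact Cx.P_orth p q h

lemma P_adj (p : ℕ) : ContinuousLinearMap.adjoint (Cx.P p) = Cx.P p :=
  ContinuousLinearMap.isSelfAdjoint_iff'.mp (Cx.P_selfAdjoint p)

lemma sum_P : ∑ p ∈ Finset.range (n + 1), Cx.P p = (1 : H →L[ℂ] H) := Cx.P_total

lemma b_decomp : Cx.b = ∑ q ∈ Finset.range (n + 1), Cx.b * Cx.P q := by
  conv_lhs => rw [← mul_one Cx.b, ← Cx.sum_P]
  rw [Finset.mul_sum]

lemma bP (q : ℕ) : Cx.b * Cx.P (q + 1) = Cx.P q * (Cx.b * Cx.P (q + 1)) := Cx.b_deg q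

lemma Pb (q : ℕ) : Cx.P q * Cx.b = Cx.b * Cx.P (q + 1) := by
  conv_lhs => rw [Cx.b_decomp, Finset.mul_sum]
  rw [Finset.sum_eq_single (q + 1)]
  · rw [Cx.bP q, ← mul_assoc, Cx.Pmul]; simp
  · intro r hr hne
    match r, hne with
    | 0, _ => rw [show Cx.b * Cx.P 0 = 0 from Cx.b_bot, mul_zero]
    | (r' + 1), hne =>
      rw [Cx.bP r', ← mul_assoc, Cx.Pmul]
      have : q ≠ r' := fun h => hne (by omega)
      simp [this]
  · intro hq
    rw [Finset.mem_range, not_lt] at hq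
    have h1 : Cx.P (q + 1) = 0 := Cx.P_bounded _ (by omega)
    simp [h1]
  
lemma Pe (q : ℕ) : ContinuousLinearMap.adjoint Cx.b * Cx.P q
    = Cx.P (q + 1) * ContinuousLinearMap.adjoint Cx.b := by
  have h := congrArg (fun A => ContinuousLinearMap.adjoint A) (Cx.Pb q)
  simp only [ContinuousLinearMap.mul_def, ContinuousLinearMap.adjoint_comp, Cx.P_adj] at h
  exact h

lemma P0e : Cx.P 0 * ContinuousLinearMap.adjoint Cx.b = 0 := by
  have h := congrArg (fun A => ContinuousLinearMap.adjoint A) Cx.b_bot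
  simp only [ContinuousLinearMap.mul_def, ContinuousLinearMap.adjoint_comp, Cx.P_adj] at h
  exact (by simpa using h : Cx.P 0 ∘L ContinuousLinearMap.adjoint Cx.b = 0)

lemma T_decomp : Cx.T = ∑ q ∈ Finset.range (n + 1), Cx.T * Cx.P q := by
  conv_lhs => rw [← mul_one Cx.T, ← Cx.sum_P]
  rw [Finset.mul_sum]

lemma PT (p : ℕ) (hp : p ≤ n) : Cx.P p * Cx.T = Cx.T * Cx.P (n - p) := by
  conv_lhs => rw [Cx.T_decomp, Finset.mul_sum]
  rw [Finset.sum_eq_single (n - p)]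
  · rw [show Cx.T * Cx.P (n - p) = Cx.P (n - (n - p)) * (Cx.T * Cx.P (n - p)) from
      Cx.T_deg _ (by omega)]
    rw [← mul_assoc, Cx.Pmul]
    have : n - (n - p) = p := by omega
    rw [this]; simp
  · intro r hr hne
    rw [Finset.mem_range] at hr
    rw [show Cx.T * Cx.P r = Cx.P (n - r) * (Cx.T * Cx.P r) from Cx.T_deg _ (by omega),
      ← mul_assoc, Cx.Pmul]
    have : p ≠ n - r := by omega
    simp [this]
  · intro hq
    rw [Finset.mem_range, not_lt] at hq
    omega
end HilbertPoincareComplex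

namespace HPCAux

variable {H : Type*} [NormedAddCommGroup H] [InnerProductSpace ℂ H] [CompleteSpace H]

lemma isUnit_of_selfAdjoint_of_bound (P : H →L[ℂ] H) (hP : IsSelfAdjoint P)
    (K : ℝ) (hbd : ∀ v, ‖v‖ ≤ K * ‖P v‖) : IsUnit P := by
  have hP' : ContinuousLinearMap.adjoint P = P := ContinuousLinearMap.isSelfAdjoint_iff'.mp hP
  have hker : P.ker = ⊥ := by
    rw [LinearMap.ker_eq_bot']
    intro v hv
    have := hbd v
    rw [show P v = 0 from hv] at this
    simp at this
    exact norm_le_zero_iff.mp (by simpa using this)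
  have hbd' : ∀ v, ‖v‖ ≤ (K.toNNReal : ℝ) * ‖P v‖ := by
    intro v
    refine le_trans (hbd v) (mul_le_mul_of_nonneg_right (Real.le_coe_toNNReal K) (norm_nonneg _))
  have hanti : AntilipschitzWith K.toNNReal P := P.antilipschitz_of_bound hbd'
  have hclosed : IsClosed (Set.range ⇑P) := hanti.isClosed_range P.uniformContinuous
  have hcl2 : IsClosed ((P.range : Submodule ℂ H) : Set H) := by
    rw [LinearMap.coe_range]; exact hclosed
  haveI : CompleteSpace P.range := hcl2.completeSpace_coe
  have horth : P.rangeᗮ = ⊥ := by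
    rw [Submodule.eq_bot_iff]
    intro u hu
    have hPu : P u = 0 := by
      have h3 : inner ℂ (P (P u)) u = (0 : ℂ) :=
        (Submodule.mem_orthogonal P.range u).mp hu _ ⟨P u, rfl⟩
      have h1 : inner ℂ (P u) (P u) = (0 : ℂ) := by
        calc inner ℂ (P u) (P u)
            = inner ℂ ((ContinuousLinearMap.adjoint P) u) (P u) := by rw [hP']
          _ = inner ℂ u (P (P u)) := ContinuousLinearMap.adjoint_inner_left P (P u) u
          _ = (0 : ℂ) := by rw [← inner_conj_symm, h3, map_zero]
      simpa [inner_self_eq_zero] using h1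
    have := hbd u
    rw [hPu] at this
    simp at this
    exact norm_le_zero_iff.mp (by simpa using this)
  have hrange : P.range = ⊤ := by
    rwa [Submodule.orthogonal_eq_bot_iff] at horth
  let e := ContinuousLinearEquiv.ofBijective P hker hrange
  refine isUnit_iff_exists.mpr ⟨(e.symm : H →L[ℂ] H), ?_, ?_⟩
  · ext x
    have : P (e.symm x) = e (e.symm x) := rfl
    simp [ContinuousLinearMap.mul_def, this]
  · ext x
    have : P x = e x := rfl
    simp [ContinuousLinearMap.mul_def, this]

set_option maxHeartbeats 1000000 in
lemma main_abstract (d f g k₁ k₂ : H →L[ℂ] H)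
    (hd : d * d = 0)
    (hdf0 : d * f + f * ContinuousLinearMap.adjoint d = 0)
    (hf : ContinuousLinearMap.adjoint f = f)
    (h1 : f * g = 1 + d * k₁ + k₁ * d)
    (h2 : g * f = 1 + ContinuousLinearMap.adjoint d * k₂ + k₂ * ContinuousLinearMap.adjoint d) :
    IsUnit (d + ContinuousLinearMap.adjoint d + f) := by
  set e := ContinuousLinearMap.adjoint d with he_def
  have he : e * e = 0 := by
    have h0 : ContinuousLinearMap.adjoint (d * d) = e * e := by
      rw [ContinuousLinearMap.mul_def, ContinuousLinearMap.mul_def,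
        ContinuousLinearMap.adjoint_comp, he_def]
    rw [hd] at h0
    simpa using h0.symm
  have hfe : f * e = -(d * f) := eq_neg_of_add_eq_zero_right hdf0
  have hdf' : d * f = -(f * e) := by rw [hfe, neg_neg]
  set Δ : H →L[ℂ] H := e * g + g * d with hΔ
  have hfΔ : f * Δ = 0 := by
    calc f * Δ = (f * e) * g + (f * g) * d := by rw [hΔ]; noncomm_ring
    _ = (-(d * f)) * g + (1 + d * k₁ + k₁ * d) * d := by rw [hfe, h1]
    _ = -(d * (f * g)) + (d + d * (k₁ * d)) + k₁ * (d * d) := by noncomm_ring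
    _ = -(d * (1 + d * k₁ + k₁ * d)) + (d + d * (k₁ * d)) + k₁ * 0 := by rw [h1, hd]
    _ = -((d * d) * k₁) := by noncomm_ring
    _ = 0 := by rw [hd]; noncomm_ring
  have hΔf : Δ * f = 0 := by
    calc Δ * f = e * (g * f) + g * (d * f) := by rw [hΔ]; noncomm_ring
    _ = e * (1 + e * k₂ + k₂ * e) + g * (-(f * e)) := by rw [h2, ← hdf']
    _ = e + (e * e) * k₂ + e * (k₂ * e) - (g * f) * e := by noncomm_ring
    _ = e + 0 * k₂ + e * (k₂ * e) - (1 + e * k₂ + k₂ * e) * e := by rw [he, h2]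
    _ = -(k₂ * (e * e)) := by noncomm_ring
    _ = 0 := by rw [he]; noncomm_ring
  have hΔd : Δ * d = e * Δ := by
    have a1 : Δ * d = e * (g * d) := by
      calc Δ * d = e * (g * d) + g * (d * d) := by rw [hΔ]; noncomm_ring
      _ = e * (g * d) + g * 0 := by rw [hd]
      _ = e * (g * d) := by noncomm_ring
    have a2 : e * Δ = e * (g * d) := by
      calc e * Δ = (e * e) * g + e * (g * d) := by rw [hΔ]; noncomm_ring
      _ = 0 * g + e * (g * d) := by rw [he]
      _ = e * (g * d) := by noncomm_ring
    rw [a1, a2]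
  set x : H →L[ℂ] H := -k₁ with hx
  set z : H →L[ℂ] H := g + Δ * k₁ with hz
  have hfz : f * z = 1 + d * k₁ + k₁ * d := by
    calc f * z = f * g + (f * Δ) * k₁ := by rw [hz]; noncomm_ring
    _ = f * g + 0 * k₁ := by rw [hfΔ]
    _ = 1 + d * k₁ + k₁ * d := by rw [h1]; noncomm_ring
  have K1 : d * x + f * z + x * d = 1 := by rw [hx, hfz]; noncomm_ring
  have K2 : e * z + z * d = 0 := by
    calc e * z + z * d = (e * g + g * d) + (e * Δ) * k₁ + Δ * (k₁ * d) := by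
          rw [hz]; noncomm_ring
    _ = Δ + (Δ * d) * k₁ + Δ * (k₁ * d) := by rw [← hΔ, ← hΔd]
    _ = Δ * (1 + (d * k₁ + k₁ * d)) := by noncomm_ring
    _ = Δ * (f * g) := by rw [h1]; noncomm_ring
    _ = (Δ * f) * g := by noncomm_ring
    _ = 0 := by rw [hΔf]; noncomm_ring
  have hcomm : e * (g * f) = (g * f) * e := by
    have c1 : e * (g * f) = e + e * (k₂ * e) := by
      calc e * (g * f) = e + (e * e) * k₂ + e * (k₂ * e) := by rw [h2]; noncomm_ring
      _ = e + 0 * k₂ + e * (k₂ * e) := by rw [he]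
      _ = e + e * (k₂ * e) := by noncomm_ring
    have c2 : (g * f) * e = e + e * (k₂ * e) := by
      calc (g * f) * e = e + e * (k₂ * e) + k₂ * (e * e) := by rw [h2]; noncomm_ring
      _ = e + e * (k₂ * e) + k₂ * 0 := by rw [he]
      _ = e + e * (k₂ * e) := by noncomm_ring
    rw [c1, c2]
  have hd1 : d * k₁ = f * g - 1 - k₁ * d := by rw [h1]; noncomm_ring
  have hgf2 : (g * f) * (g * f) = g * f + e * ((g * f) * k₂) + ((g * f) * k₂) * e := by
    nth_rewrite 2 [h2]
    calc (g * f) * (1 + e * k₂ + k₂ * e)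
        = g * f + ((g * f) * e) * k₂ + ((g * f) * k₂) * e := by noncomm_ring
    _ = g * f + (e * (g * f)) * k₂ + ((g * f) * k₂) * e := by rw [hcomm]
    _ = g * f + e * ((g * f) * k₂) + ((g * f) * k₂) * e := by noncomm_ring
  have hzf : z * f = 1 + e * k₂ + k₂ * e + e * (g * (k₁ * f)) + (g * (k₁ * f)) * e
      + e * ((g * f) * k₂) + ((g * f) * k₂) * e := by
    calc z * f = g * f + e * (g * (k₁ * f)) + g * ((d * k₁) * f) := by rw [hz, hΔ]; noncomm_ring
    _ = g * f + e * (g * (k₁ * f)) + g * ((f * g - 1 - k₁ * d) * f) := by rw [hd1]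
    _ = g * f + e * (g * (k₁ * f)) + (g * f) * (g * f) - g * f - g * (k₁ * (d * f)) := by
          noncomm_ring
    _ = g * f + e * (g * (k₁ * f)) + (g * f) * (g * f) - g * f - g * (k₁ * (-(f * e))) := by
          rw [hdf']
    _ = e * (g * (k₁ * f)) + (g * (k₁ * f)) * e + (g * f) * (g * f) := by noncomm_ring
    _ = e * (g * (k₁ * f)) + (g * (k₁ * f)) * e
        + (g * f + e * ((g * f) * k₂) + ((g * f) * k₂) * e) := by rw [hgf2]
    _ = e * (g * (k₁ * f)) + (g * (k₁ * f)) * e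
        + ((1 + e * k₂ + k₂ * e) + e * ((g * f) * k₂) + ((g * f) * k₂) * e) := by rw [h2]
    _ = 1 + e * k₂ + k₂ * e + e * (g * (k₁ * f)) + (g * (k₁ * f)) * e
        + e * ((g * f) * k₂) + ((g * f) * k₂) * e := by noncomm_ring
  set w : H →L[ℂ] H := -(k₂ + g * (k₁ * f) + (g * f) * k₂) with hw
  have K3' : e * w + w * e + z * f = 1 := by rw [hw, hzf]; noncomm_ring
  set ζ : H →L[ℂ] H := f * w + x * f with hζ
  have hK1' : d * x + x * d = 1 - f * z := by rw [← K1]; noncomm_ring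
  have hdζ0 : d * ζ - ζ * e = 0 := by
    calc d * ζ - ζ * e
        = (d * f) * w + (d * x + x * d) * f - f * (w * e) - x * ((f * e) + (d * f)) := by
          rw [hζ]; noncomm_ring
    _ = (d * f) * w + (d * x + x * d) * f - f * (w * e) - x * 0 := by rw [hfe]; noncomm_ring
    _ = (-(f * e)) * w + (1 - f * z) * f - f * (w * e) - 0 := by rw [hdf', hK1']; noncomm_ring
    _ = -(f * (e * w + w * e + z * f)) + f := by noncomm_ring
    _ = -(f * 1) + f := by rw [K3']
    _ = 0 := by noncomm_ring
  have hdζ : d * ζ = ζ * e := sub_eq_zero.mp hdζ0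
  have hez : e * z = -(z * d) := eq_neg_of_add_eq_zero_left K2
  set w' : H →L[ℂ] H := w - z * ζ with hw'
  set y' : H →L[ℂ] H := -(x * ζ) with hy'
  have K3 : e * w' + z * f + w' * e = 1 := by
    calc e * w' + z * f + w' * e
        = (e * w + w * e + z * f) - ((e * z) * ζ + z * (ζ * e)) := by rw [hw']; noncomm_ring
    _ = 1 - ((-(z * d)) * ζ + z * (d * ζ)) := by rw [K3', hez, ← hdζ]
    _ = 1 := by noncomm_ring
  have K4 : d * y' + f * w' + x * f + y' * e = 0 := by
    calc d * y' + f * w' + x * f + y' * e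
        = (f * w + x * f) - (d * x + f * z + x * d) * ζ
          - (x * ((ζ * e) - (d * ζ))) := by rw [hy', hw']; noncomm_ring
    _ = (f * w + x * f) - 1 * ζ - (x * ((d * ζ) - (d * ζ))) := by rw [K1, ← hdζ]
    _ = (f * w + x * f) - ζ := by noncomm_ring
    _ = 0 := by rw [← hζ]; noncomm_ring
  -- analytic part
  clear_value Δ x z w ζ w' y'
  clear hΔ hx hz hw hζ hw' hy' hfΔ hΔf hΔd hfz hcomm hd1 hgf2 hzf hK1' hdζ0 hez hdζ K3'
  set P : H →L[ℂ] H := d + e + f with hP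
  have hPapp : ∀ v : H, P v = (d v + f v) + e v := by
    intro v
    rw [hP]
    simp only [ContinuousLinearMap.add_apply]
    abel
  have i1 : ∀ u m : H, (inner ℂ u (d m) : ℂ) = inner ℂ (e u) m := fun u m =>
    (ContinuousLinearMap.adjoint_inner_left d m u).symm
  have i2 : ∀ u m : H, (inner ℂ u (f m) : ℂ) = inner ℂ (f u) m := by
    intro u m
    conv_rhs => rw [← hf]
    exact (ContinuousLinearMap.adjoint_inner_left f m u).symm
  have i3 : ∀ u m : H, (inner ℂ (d u) m : ℂ) = inner ℂ u (e m) := fun u m =>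
    (ContinuousLinearMap.adjoint_inner_right d u m).symm
  have happ : ∀ (A B : H →L[ℂ] H) (v : H), (A * B) v = A (B v) := fun A B v => rfl
  have hnormA : ∀ v : H, ‖d v + f v‖ ≤ ‖P v‖ ∧ ‖e v‖ ≤ ‖P v‖ := by
    intro v
    have t1 : (inner ℂ (d v) (e v) : ℂ) = 0 := by
      rw [i3]
      have h5 : e (e v) = 0 := congrArg (fun (A : H →L[ℂ] H) => A v) he
      rw [h5, inner_zero_right]
    have t2 : (inner ℂ (f v) (e v) : ℂ) + (starRingEnd ℂ) (inner ℂ (f v) (e v) : ℂ) = 0 := by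
      have hfev : f (e v) = -(d (f v)) := congrArg (fun (A : H →L[ℂ] H) => A v) hfe
      have s1 : (inner ℂ (f v) (e v) : ℂ) = - inner ℂ (e v) (f v) := by
        rw [← i2 v (e v), hfev, inner_neg_right, i1]
      rw [s1, map_neg, inner_conj_symm, s1]
      ring
    have hre : RCLike.re (inner ℂ (d v + f v) (e v) : ℂ) = 0 := by
      have h7 : (inner ℂ (d v + f v) (e v) : ℂ) = inner ℂ (f v) (e v) := by
        rw [inner_add_left, t1, zero_add]
      rw [h7]
      have h8 := t2
      rw [Complex.add_conj] at h8
      have h9 : 2 * (inner ℂ (f v) (e v) : ℂ).re = 0 := by exact_mod_cast h8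
      have : (inner ℂ (f v) (e v) : ℂ).re = 0 := by linarith
      simpa [RCLike.re_to_complex] using this
    have hsq : ‖P v‖ ^ 2 = ‖d v + f v‖ ^ 2 + ‖e v‖ ^ 2 := by
      rw [hPapp v, norm_add_sq (𝕜 := ℂ), hre]
      ring
    constructor <;>
      nlinarith [norm_nonneg (d v + f v), norm_nonneg (e v), norm_nonneg (P v), hsq]
  have key1 : ∀ v : H, v = d (x v + y' v) + f (z v + w' v) + x (d v + f v) + y' (e v) := by
    intro v
    have hsum : (d * x + f * z + x * d) + (d * y' + f * w' + x * f + y' * e) = 1 := by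
      rw [K1, K4, add_zero]
    have h : d (x v) + f (z v) + x (d v) + (d (y' v) + f (w' v) + x (f v) + y' (e v)) = v :=
      congrArg (fun (A : H →L[ℂ] H) => A v) hsum
    calc v = d (x v) + f (z v) + x (d v) + (d (y' v) + f (w' v) + x (f v) + y' (e v)) := h.symm
    _ = d (x v + y' v) + f (z v + w' v) + x (d v + f v) + y' (e v) := by
        rw [map_add d, map_add f, map_add x]; abel
  have key2 : ∀ v : H, v = e (z v + w' v) + z (d v + f v) + w' (e v) := by
    intro v
    have hsum : (e * z + z * d) + (e * w' + z * f + w' * e) = 1 := by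
      rw [K2, K3, zero_add]
    have h : e (z v) + z (d v) + (e (w' v) + z (f v) + w' (e v)) = v :=
      congrArg (fun (A : H →L[ℂ] H) => A v) hsum
    calc v = e (z v) + z (d v) + (e (w' v) + z (f v) + w' (e v)) := h.symm
    _ = e (z v + w' v) + z (d v + f v) + w' (e v) := by
        rw [map_add e, map_add z]; abel
  set C : ℝ := ‖x‖ + ‖y'‖ + ‖z‖ + ‖w'‖ with hC
  have hC0 : 0 ≤ C := by positivity
  have hbound : ∀ v : H, ‖v‖ ≤ (2 * C + 1) * ‖P v‖ := by
    intro v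
    set A := d v + f v with hA
    have e1 : (inner ℂ v v : ℂ)
        = inner ℂ (e v) (x v + y' v) + inner ℂ (f v) (z v + w' v)
          + inner ℂ v (x A) + inner ℂ v (y' (e v)) := by
      calc (inner ℂ v v : ℂ)
          = inner ℂ v (d (x v + y' v) + f (z v + w' v) + x A + y' (e v)) := by
            nth_rewrite 2 [key1 v]
            rfl
      _ = inner ℂ v (d (x v + y' v)) + inner ℂ v (f (z v + w' v))
            + inner ℂ v (x A) + inner ℂ v (y' (e v)) := by
            rw [inner_add_right, inner_add_right, inner_add_right]
      _ = _ := by rw [i1, i2]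
    have e4 : (inner ℂ v (e (z v + w' v)) : ℂ)
        = inner ℂ v v - inner ℂ v (z A) - inner ℂ v (w' (e v)) := by
      have h5 : e (z v + w' v) = v - (z A + w' (e v)) := by
        have h6 := key2 v
        rw [← hA] at h6
        calc e (z v + w' v)
            = (e (z v + w' v) + z A + w' (e v)) - (z A + w' (e v)) := by abel
        _ = v - (z A + w' (e v)) := by rw [← h6]
      rw [h5, inner_sub_right, inner_add_right]
      ring
    have e2 : (inner ℂ (f v) (z v + w' v) : ℂ)
        = inner ℂ A (z v + w' v)
          - (inner ℂ v v - inner ℂ v (z A) - inner ℂ v (w' (e v))) := by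
      have hfvA : f v = A - d v := by rw [hA]; abel
      rw [hfvA, inner_sub_left, i3, e4]
    have hEq : 2 * (inner ℂ v v : ℂ)
        = inner ℂ (e v) (x v + y' v) + inner ℂ A (z v + w' v)
          + inner ℂ v (z A) + inner ℂ v (w' (e v)) + inner ℂ v (x A) + inner ℂ v (y' (e v)) := by
      linear_combination e1 + e2
    have habs : (2:ℝ) * ‖v‖^2 ≤ ‖(inner ℂ (e v) (x v + y' v) : ℂ)‖ + ‖(inner ℂ A (z v + w' v) : ℂ)‖
        + ‖(inner ℂ v (z A) : ℂ)‖ + ‖(inner ℂ v (w' (e v)) : ℂ)‖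
        + ‖(inner ℂ v (x A) : ℂ)‖ + ‖(inner ℂ v (y' (e v)) : ℂ)‖ := by
      have h0 : (2:ℝ) * ‖v‖^2 = RCLike.re (2 * (inner ℂ v v : ℂ)) := by
        simp [inner_self_eq_norm_sq, ← Complex.ofReal_pow]
      rw [h0, hEq]
      refine le_trans (RCLike.re_le_norm _) ?_
      calc ‖(inner ℂ (e v) (x v + y' v) : ℂ) + inner ℂ A (z v + w' v)
          + inner ℂ v (z A) + inner ℂ v (w' (e v)) + inner ℂ v (x A) + inner ℂ v (y' (e v))‖
          ≤ ‖(inner ℂ (e v) (x v + y' v) : ℂ) + inner ℂ A (z v + w' v)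
          + inner ℂ v (z A) + inner ℂ v (w' (e v)) + inner ℂ v (x A)‖ + ‖(inner ℂ v (y' (e v)) : ℂ)‖ :=
            norm_add_le _ _
      _ ≤ ‖(inner ℂ (e v) (x v + y' v) : ℂ) + inner ℂ A (z v + w' v)
          + inner ℂ v (z A) + inner ℂ v (w' (e v))‖ + ‖(inner ℂ v (x A) : ℂ)‖
          + ‖(inner ℂ v (y' (e v)) : ℂ)‖ := by gcongr; exact norm_add_le _ _
      _ ≤ ‖(inner ℂ (e v) (x v + y' v) : ℂ) + inner ℂ A (z v + w' v)
          + inner ℂ v (z A)‖ + ‖(inner ℂ v (w' (e v)) : ℂ)‖ + ‖(inner ℂ v (x A) : ℂ)‖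
          + ‖(inner ℂ v (y' (e v)) : ℂ)‖ := by gcongr; exact norm_add_le _ _
      _ ≤ ‖(inner ℂ (e v) (x v + y' v) : ℂ) + inner ℂ A (z v + w' v)‖ + ‖(inner ℂ v (z A) : ℂ)‖
          + ‖(inner ℂ v (w' (e v)) : ℂ)‖ + ‖(inner ℂ v (x A) : ℂ)‖
          + ‖(inner ℂ v (y' (e v)) : ℂ)‖ := by gcongr; exact norm_add_le _ _
      _ ≤ ‖(inner ℂ (e v) (x v + y' v) : ℂ)‖ + ‖(inner ℂ A (z v + w' v) : ℂ)‖
          + ‖(inner ℂ v (z A) : ℂ)‖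
          + ‖(inner ℂ v (w' (e v)) : ℂ)‖ + ‖(inner ℂ v (x A) : ℂ)‖
          + ‖(inner ℂ v (y' (e v)) : ℂ)‖ := by gcongr; exact norm_add_le _ _
    have hev : ‖e v‖ ≤ ‖P v‖ := (hnormA v).2
    have hAv : ‖A‖ ≤ ‖P v‖ := (hnormA v).1
    have b1 : ‖(inner ℂ (e v) (x v + y' v) : ℂ)‖ ≤ (‖x‖ + ‖y'‖) * (‖P v‖ * ‖v‖) := by
      refine le_trans (norm_inner_le_norm _ _) ?_
      have hm : ‖x v + y' v‖ ≤ (‖x‖ + ‖y'‖) * ‖v‖ := by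
        refine le_trans (norm_add_le _ _) ?_
        have := x.le_opNorm v
        have := y'.le_opNorm v
        nlinarith [norm_nonneg v]
      calc ‖e v‖ * ‖x v + y' v‖ ≤ ‖P v‖ * ((‖x‖ + ‖y'‖) * ‖v‖) := by
            exact mul_le_mul hev hm (norm_nonneg _) (norm_nonneg _)
      _ = (‖x‖ + ‖y'‖) * (‖P v‖ * ‖v‖) := by ring
    have b2 : ‖(inner ℂ A (z v + w' v) : ℂ)‖ ≤ (‖z‖ + ‖w'‖) * (‖P v‖ * ‖v‖) := by
      refine le_trans (norm_inner_le_norm _ _) ?_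
      have hm : ‖z v + w' v‖ ≤ (‖z‖ + ‖w'‖) * ‖v‖ := by
        refine le_trans (norm_add_le _ _) ?_
        have := z.le_opNorm v
        have := w'.le_opNorm v
        nlinarith [norm_nonneg v]
      calc ‖A‖ * ‖z v + w' v‖ ≤ ‖P v‖ * ((‖z‖ + ‖w'‖) * ‖v‖) := by
            exact mul_le_mul hAv hm (norm_nonneg _) (norm_nonneg _)
      _ = (‖z‖ + ‖w'‖) * (‖P v‖ * ‖v‖) := by ring
    have b3 : ‖(inner ℂ v (z A) : ℂ)‖ ≤ ‖z‖ * (‖P v‖ * ‖v‖) := by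
      refine le_trans (norm_inner_le_norm _ _) ?_
      have h5 : ‖z A‖ ≤ ‖z‖ * ‖P v‖ :=
        le_trans (z.le_opNorm A) (by nlinarith [z.opNorm_nonneg])
      calc ‖v‖ * ‖z A‖ ≤ ‖v‖ * (‖z‖ * ‖P v‖) :=
            mul_le_mul_of_nonneg_left h5 (norm_nonneg _)
      _ = ‖z‖ * (‖P v‖ * ‖v‖) := by ring
    have b4 : ‖(inner ℂ v (w' (e v)) : ℂ)‖ ≤ ‖w'‖ * (‖P v‖ * ‖v‖) := by
      refine le_trans (norm_inner_le_norm _ _) ?_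
      have h5 : ‖w' (e v)‖ ≤ ‖w'‖ * ‖P v‖ :=
        le_trans (w'.le_opNorm (e v)) (by nlinarith [w'.opNorm_nonneg])
      calc ‖v‖ * ‖w' (e v)‖ ≤ ‖v‖ * (‖w'‖ * ‖P v‖) :=
            mul_le_mul_of_nonneg_left h5 (norm_nonneg _)
      _ = ‖w'‖ * (‖P v‖ * ‖v‖) := by ring
    have b5 : ‖(inner ℂ v (x A) : ℂ)‖ ≤ ‖x‖ * (‖P v‖ * ‖v‖) := by
      refine le_trans (norm_inner_le_norm _ _) ?_
      have h5 : ‖x A‖ ≤ ‖x‖ * ‖P v‖ :=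
        le_trans (x.le_opNorm A) (by nlinarith [x.opNorm_nonneg])
      calc ‖v‖ * ‖x A‖ ≤ ‖v‖ * (‖x‖ * ‖P v‖) :=
            mul_le_mul_of_nonneg_left h5 (norm_nonneg _)
      _ = ‖x‖ * (‖P v‖ * ‖v‖) := by ring
    have b6 : ‖(inner ℂ v (y' (e v)) : ℂ)‖ ≤ ‖y'‖ * (‖P v‖ * ‖v‖) := by
      refine le_trans (norm_inner_le_norm _ _) ?_
      have h5 : ‖y' (e v)‖ ≤ ‖y'‖ * ‖P v‖ :=
        le_trans (y'.le_opNorm (e v)) (by nlinarith [y'.opNorm_nonneg])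
      calc ‖v‖ * ‖y' (e v)‖ ≤ ‖v‖ * (‖y'‖ * ‖P v‖) :=
            mul_le_mul_of_nonneg_left h5 (norm_nonneg _)
      _ = ‖y'‖ * (‖P v‖ * ‖v‖) := by ring
    have hfinal : 2 * ‖v‖^2 ≤ 2 * C * (‖P v‖ * ‖v‖) := by
      rw [hC]; linarith [habs, b1, b2, b3, b4, b5, b6]
    rcases eq_or_lt_of_le (norm_nonneg v) with h0 | h0
    · rw [← h0]
      positivity
    · have h6 : (2 * ‖v‖) * ‖v‖ ≤ ((2 * C + 1) * ‖P v‖) * ‖v‖ := by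
        nlinarith [norm_nonneg (P v)]
      have h7 := le_of_mul_le_mul_right h6 h0
      linarith
  have hPsa : IsSelfAdjoint P := by
    rw [hP]
    have : star (d + e + f) = d + e + f := by
      rw [star_add, star_add, ContinuousLinearMap.star_eq_adjoint,
        ContinuousLinearMap.star_eq_adjoint, ContinuousLinearMap.star_eq_adjoint, hf, he_def,
        ContinuousLinearMap.adjoint_adjoint]
      abel
    exact this
  exact isUnit_of_selfAdjoint_of_bound P hPsa (2 * C + 1) hbound

end HPCAux
/-- `S` is self-adjoint, `b S + S b* = 0`, and the self-adjoint
operators `B + S` and `B - S` are invertible. -/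
theorem statement0 {n : ℕ} {H : Type*} [NormedAddCommGroup H] [InnerProductSpace ℂ H]
    [CompleteSpace H] (Cx : HilbertPoincareComplex n H)
    (B S : H →L[ℂ] H)
    (hB : B = Cx.b + ContinuousLinearMap.adjoint Cx.b)
    (hS : S = dualityS Cx) :
    IsSelfAdjoint S ∧
    Cx.b ∘L S + S ∘L ContinuousLinearMap.adjoint Cx.b = 0 ∧
    IsSelfAdjoint (B + S) ∧ IsSelfAdjoint (B - S) ∧
    IsUnit (B + S) ∧ IsUnit (B - S) := by  classical
  obtain ⟨T', h₁, h₂, hTe1, hTe2⟩ := Cx.T_equiv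
  set e : H →L[ℂ] H := ContinuousLinearMap.adjoint Cx.b with he_def
  set c : ℕ → ℂ := fun p => Complex.I ^ (p * (p - 1) + n / 2) with hc
  have hS' : S = ∑ p ∈ Finset.range (n + 1), c p • (Cx.T * Cx.P p) := hS
  -- scalar facts
  have hccj : ∀ p : ℕ, c p * (starRingEnd ℂ) (c p) = 1 := by
    intro p
    rw [hc]
    simp only
    rw [map_pow, Complex.conj_I, ← mul_pow]
    simp [Complex.I_mul_I]
  have hcjc : ∀ p : ℕ, (starRingEnd ℂ) (c p) * c p = 1 := by
    intro p; rw [mul_comm]; exact hccj p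
  have hcsucc : ∀ q : ℕ, c (q + 1) = (-1 : ℂ) ^ q * c q := by
    intro q
    rw [hc]
    simp only
    have h1 : ((-1 : ℂ)) ^ q = (Complex.I ^ 2) ^ q := by rw [Complex.I_sq]
    rw [h1, ← pow_mul, ← pow_add, HPCAux.exp_succ_eq]
  have hcrefl : ∀ j : ℕ, j ≤ n →
      (starRingEnd ℂ) (c (n - j)) * (-1 : ℂ) ^ (j * (n - j)) = c j := by
    intro j hj
    rw [hc]
    simp only
    rw [map_pow, Complex.conj_I]
    have h2 : (-Complex.I) = Complex.I ^ 3 := by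
      rw [pow_succ, Complex.I_sq]; ring
    have h3 : (-1 : ℂ) = Complex.I ^ 2 := (Complex.I_sq).symm
    rw [h2, h3, ← pow_mul, ← pow_mul, ← pow_add]
    exact HPCAux.c_reflect j (n - j) (n / 2) (n % 2)
      (Nat.mod_lt _ (by norm_num)) (by omega)
  -- PART 1 : S selfadjoint
  have hstarTP : ∀ p : ℕ, star (Cx.T * Cx.P p) = Cx.P p * ContinuousLinearMap.adjoint Cx.T := by
    intro p
    rw [star_mul, ContinuousLinearMap.star_eq_adjoint, ContinuousLinearMap.star_eq_adjoint,
      Cx.P_adj]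
  have hSadj : ContinuousLinearMap.adjoint S = S := by
    have h0 : ContinuousLinearMap.adjoint S = star S :=
      (ContinuousLinearMap.star_eq_adjoint S).symm
    rw [h0, hS', star_sum]
    have hterm : ∀ p ∈ Finset.range (n + 1),
        star (c p • (Cx.T * Cx.P p))
          = ((starRingEnd ℂ) (c p) * (-1 : ℂ) ^ ((n - p) * p)) • (Cx.T * Cx.P (n - p)) := by
      intro p hp
      have hp' : p ≤ n := by
        have := Finset.mem_range.mp hp; omega
      have hσc : (starRingEnd ℂ) ((-1 : ℂ) ^ ((n - p) * p)) = (-1 : ℂ) ^ ((n - p) * p) := by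
        rw [map_pow, map_neg, map_one]
      have hσσ : ((-1 : ℂ) ^ ((n - p) * p)) * ((-1 : ℂ) ^ ((n - p) * p)) = 1 := by
        rw [← mul_pow]; norm_num
      have h7 : star (ContinuousLinearMap.adjoint Cx.T * Cx.P p) = Cx.P p * Cx.T := by
        rw [star_mul, ContinuousLinearMap.star_eq_adjoint, ContinuousLinearMap.star_eq_adjoint,
          Cx.P_adj, ContinuousLinearMap.adjoint_adjoint]
      have h9 : Cx.P p * Cx.T
          = ((-1 : ℂ) ^ ((n - p) * p)) • (Cx.P p * ContinuousLinearMap.adjoint Cx.T) := by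
        have h5 : ContinuousLinearMap.adjoint Cx.T * Cx.P p
            = ((-1 : ℂ) ^ ((n - p) * p)) • (Cx.T * Cx.P p) := Cx.T_adjoint p hp'
        have h6 := congrArg star h5
        rw [star_smul, h7, hstarTP] at h6
        simp only [star_pow, star_neg, star_one] at h6
        exact h6
      have hPT' : Cx.P p * ContinuousLinearMap.adjoint Cx.T
          = ((-1 : ℂ) ^ ((n - p) * p)) • (Cx.P p * Cx.T) := by
        rw [h9, smul_smul, hσσ, one_smul]
      calc star (c p • (Cx.T * Cx.P p))
          = (starRingEnd ℂ) (c p) • star (Cx.T * Cx.P p) := by rw [star_smul]; rfl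
      _ = (starRingEnd ℂ) (c p) • (Cx.P p * ContinuousLinearMap.adjoint Cx.T) := by
          rw [hstarTP]
      _ = (starRingEnd ℂ) (c p) • (((-1 : ℂ) ^ ((n - p) * p)) • (Cx.P p * Cx.T)) := by
          rw [hPT']
      _ = ((starRingEnd ℂ) (c p) * (-1 : ℂ) ^ ((n - p) * p)) • (Cx.P p * Cx.T) := by
          rw [smul_smul]
      _ = ((starRingEnd ℂ) (c p) * (-1 : ℂ) ^ ((n - p) * p)) • (Cx.T * Cx.P (n - p)) := by
          rw [Cx.PT p hp']
    rw [Finset.sum_congr rfl hterm]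
    have hrefl := Finset.sum_range_reflect
      (fun p => ((starRingEnd ℂ) (c p) * (-1 : ℂ) ^ ((n - p) * p)) • (Cx.T * Cx.P (n - p)))
      (n + 1)
    simp only [Nat.add_sub_cancel] at hrefl
    rw [← hrefl]
    apply Finset.sum_congr rfl
    intro j hj
    have hj' : j ≤ n := by
      have := Finset.mem_range.mp hj; omega
    rw [Nat.sub_sub_self hj', hcrefl j hj']
  -- PART 2 : b S + S b* = 0
  have hbS : Cx.b * S + S * e = 0 := by
    have hbS1 : Cx.b * S = ∑ p ∈ Finset.range (n + 1), c p • (Cx.b * (Cx.T * Cx.P p)) := by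
      rw [hS', Finset.mul_sum]
      exact Finset.sum_congr rfl fun p _ => mul_smul_comm _ _ _
    have hSe1 : S * e = ∑ p ∈ Finset.range (n + 1), c p • ((Cx.T * Cx.P p) * e) := by
      rw [hS', Finset.sum_mul]
      exact Finset.sum_congr rfl fun p _ => smul_mul_assoc _ _ _
    have hP0e : Cx.P 0 * e = 0 := Cx.P0e
    have hPe' : ∀ p : ℕ, Cx.P (p + 1) * e = e * Cx.P p := fun p => (Cx.Pe p).symm
    have hSe2 : S * e = ∑ p ∈ Finset.range n, c (p + 1) • (Cx.T * (e * Cx.P p)) := by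
      rw [hSe1, Finset.sum_range_succ']
      have hzero : c 0 • ((Cx.T * Cx.P 0) * e) = 0 := by
        have h5 : (Cx.T * Cx.P 0) * e = 0 := by
          rw [mul_assoc, hP0e, mul_zero]
        rw [h5, smul_zero]
      rw [hzero, add_zero]
      apply Finset.sum_congr rfl
      intro i _
      congr 1
      rw [mul_assoc, hPe']
    have hbS2 : Cx.b * S = ∑ p ∈ Finset.range n, c p • (Cx.b * (Cx.T * Cx.P p)) := by
      rw [hbS1, Finset.sum_range_succ]
      have h5 : Cx.b * (Cx.T * Cx.P n) = 0 := by
        have h6 : Cx.T * Cx.P n = Cx.P 0 * (Cx.T * Cx.P n) := by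
          have h7 := Cx.T_deg n le_rfl
          rw [Nat.sub_self] at h7
          exact h7
        rw [h6, ← mul_assoc, show Cx.b * Cx.P 0 = 0 from Cx.b_bot, zero_mul]
      rw [h5, smul_zero, add_zero]
    rw [hbS2, hSe2, ← Finset.sum_add_distrib]
    apply Finset.sum_eq_zero
    intro q hq
    have hq' : q ≤ n := le_of_lt (Finset.mem_range.mp hq)
    have hTb' : Cx.T * (e * Cx.P q) = -(((-1 : ℂ) ^ q) • (Cx.b * (Cx.T * Cx.P q))) := by
      have h6 : (Cx.T * e) * Cx.P q + ((-1 : ℂ) ^ q) • ((Cx.b * Cx.T) * Cx.P q) = 0 :=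
        Cx.T_b q hq'
      have h8 := eq_neg_of_add_eq_zero_left h6
      calc Cx.T * (e * Cx.P q) = (Cx.T * e) * Cx.P q := by rw [mul_assoc]
      _ = -(((-1 : ℂ) ^ q) • ((Cx.b * Cx.T) * Cx.P q)) := h8
      _ = -(((-1 : ℂ) ^ q) • (Cx.b * (Cx.T * Cx.P q))) := by rw [mul_assoc]
    rw [hTb', smul_neg, hcsucc q, smul_smul]
    have hσ2 : ((-1 : ℂ) ^ q * c q) * ((-1 : ℂ) ^ q) = c q := by
      have h5 : ((-1 : ℂ) ^ q) * ((-1 : ℂ) ^ q) = 1 := by rw [← mul_pow]; norm_num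
      calc ((-1 : ℂ) ^ q * c q) * ((-1 : ℂ) ^ q) = c q * (((-1 : ℂ) ^ q) * ((-1 : ℂ) ^ q)) := by
            ring
      _ = c q := by rw [h5, mul_one]
    rw [hσ2]
    simp
  -- PART 3 : homotopy data, conjugated
  set k₁ : H →L[ℂ] H := ∑ p ∈ Finset.range (n + 1), Cx.P (p + 1) * (h₁ * Cx.P p) with hk₁
  set k₂ : H →L[ℂ] H := ∑ p ∈ Finset.range (n + 1), Cx.P p * (h₂ * Cx.P (p + 1)) with hk₂
  set T'' : H →L[ℂ] H := ∑ q ∈ Finset.range (n + 1), Cx.P (n - q) * (T' * Cx.P q) with hT''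
  set U : H →L[ℂ] H := ∑ p ∈ Finset.range (n + 1), c p • Cx.P p with hU
  set Ub : H →L[ℂ] H := ∑ p ∈ Finset.range (n + 1), (starRingEnd ℂ) (c p) • Cx.P p with hUb
  set g : H →L[ℂ] H := Ub * T'' with hg
  have hPP : ∀ m : ℕ, Cx.P m * Cx.P m = Cx.P m := by
    intro m; rw [Cx.Pmul]; simp
  have hPPne : ∀ m r : ℕ, m ≠ r → Cx.P m * Cx.P r = 0 := by
    intro m r hmr; rw [Cx.Pmul]; simp [hmr]
  have hSU : S = Cx.T * U := by
    rw [hS', hU, Finset.mul_sum]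
    exact Finset.sum_congr rfl fun p _ => (mul_smul_comm _ _ _).symm
  have hUUb : U * Ub = 1 := by
    rw [hU, hUb, Finset.sum_mul_sum]
    calc ∑ p ∈ Finset.range (n + 1), ∑ q ∈ Finset.range (n + 1),
          (c p • Cx.P p) * ((starRingEnd ℂ) (c q) • Cx.P q)
        = ∑ p ∈ Finset.range (n + 1), Cx.P p := by
          apply Finset.sum_congr rfl
          intro p hp
          rw [Finset.sum_eq_single p]
          · rw [smul_mul_assoc, mul_smul_comm, smul_smul, hPP, hccj, one_smul]
          · intro q _ hqp
            rw [smul_mul_assoc, mul_smul_comm, smul_smul, hPPne p q (fun h => hqp h.symm),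
              smul_zero]
          · intro hp'; exact absurd hp hp'
    _ = 1 := Cx.sum_P
  have hUbU : Ub * U = 1 := by
    rw [hU, hUb, Finset.sum_mul_sum]
    calc ∑ p ∈ Finset.range (n + 1), ∑ q ∈ Finset.range (n + 1),
          ((starRingEnd ℂ) (c p) • Cx.P p) * (c q • Cx.P q)
        = ∑ p ∈ Finset.range (n + 1), Cx.P p := by
          apply Finset.sum_congr rfl
          intro p hp
          rw [Finset.sum_eq_single p]
          · rw [smul_mul_assoc, mul_smul_comm, smul_smul, hPP, hcjc, one_smul]
          · intro q _ hqp
            rw [smul_mul_assoc, mul_smul_comm, smul_smul, hPPne p q (fun h => hqp h.symm),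
              smul_zero]
          · intro hp'; exact absurd hp hp'
    _ = 1 := Cx.sum_P
  have hconj : ∀ X : H →L[ℂ] H, (∀ r, X * Cx.P r = Cx.P r * X) → Ub * (X * U) = X := by
    intro X hX
    have hXU : X * U = U * X := by
      rw [hU, Finset.mul_sum, Finset.sum_mul]
      apply Finset.sum_congr rfl
      intro p _
      rw [mul_smul_comm, smul_mul_assoc, hX p]
    rw [hXU, ← mul_assoc, hUbU, one_mul]
  have hdiag : ∀ (m : ℕ) (Y : H →L[ℂ] H) (r : ℕ),
      (Cx.P m * (Y * Cx.P m)) * Cx.P r = Cx.P r * (Cx.P m * (Y * Cx.P m)) := by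
    intro m Y r
    by_cases hmr : m = r
    · subst hmr
      calc (Cx.P m * (Y * Cx.P m)) * Cx.P m = Cx.P m * (Y * (Cx.P m * Cx.P m)) := by
            noncomm_ring
      _ = Cx.P m * (Y * Cx.P m) := by rw [hPP]
      _ = (Cx.P m * Cx.P m) * (Y * Cx.P m) := by rw [hPP]
      _ = Cx.P m * (Cx.P m * (Y * Cx.P m)) := by noncomm_ring
    · calc (Cx.P m * (Y * Cx.P m)) * Cx.P r = Cx.P m * (Y * (Cx.P m * Cx.P r)) := by
            noncomm_ring
      _ = 0 := by rw [hPPne m r hmr]; simp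
      _ = (Cx.P r * Cx.P m) * (Y * Cx.P m) := by rw [hPPne r m (Ne.symm hmr), zero_mul]
      _ = Cx.P r * (Cx.P m * (Y * Cx.P m)) := by noncomm_ring
  -- R1
  have hTT'op : Cx.T * T' = 1 + (Cx.b * h₁ + h₁ * Cx.b) := by
    have h5 : Cx.T * T' - 1 = Cx.b * h₁ + h₁ * Cx.b := hTe1
    exact eq_add_of_sub_eq' h5
  have hΦTT' : Cx.T * T'' = ∑ q ∈ Finset.range (n + 1), Cx.P q * ((Cx.T * T') * Cx.P q) := by
    rw [hT'', Finset.mul_sum]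
    apply Finset.sum_congr rfl
    intro q hq
    have hq' : q ≤ n := by have := Finset.mem_range.mp hq; omega
    calc Cx.T * (Cx.P (n - q) * (T' * Cx.P q))
        = (Cx.T * Cx.P (n - q)) * (T' * Cx.P q) := by rw [← mul_assoc]
    _ = (Cx.P q * Cx.T) * (T' * Cx.P q) := by rw [← Cx.PT q hq']
    _ = Cx.P q * ((Cx.T * T') * Cx.P q) := by noncomm_ring
  have hΦ1 : ∑ q ∈ Finset.range (n + 1), Cx.P q * ((1 : H →L[ℂ] H) * Cx.P q) = 1 := by
    calc ∑ q ∈ Finset.range (n + 1), Cx.P q * ((1 : H →L[ℂ] H) * Cx.P q)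
        = ∑ q ∈ Finset.range (n + 1), Cx.P q := by
          apply Finset.sum_congr rfl
          intro q _
          rw [one_mul, hPP]
    _ = 1 := Cx.sum_P
  have hΦbh : ∑ q ∈ Finset.range (n + 1), Cx.P q * ((Cx.b * h₁) * Cx.P q) = Cx.b * k₁ := by
    rw [hk₁, Finset.mul_sum]
    apply Finset.sum_congr rfl
    intro q _
    calc Cx.P q * ((Cx.b * h₁) * Cx.P q) = (Cx.P q * Cx.b) * (h₁ * Cx.P q) := by noncomm_ring
    _ = (Cx.b * Cx.P (q + 1)) * (h₁ * Cx.P q) := by rw [Cx.Pb]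
    _ = Cx.b * (Cx.P (q + 1) * (h₁ * Cx.P q)) := by rw [mul_assoc]
  have hΦhb : ∑ q ∈ Finset.range (n + 1), Cx.P q * ((h₁ * Cx.b) * Cx.P q) = k₁ * Cx.b := by
    have rhs' : k₁ * Cx.b
        = ∑ p ∈ Finset.range (n + 1), Cx.P (p + 1) * (h₁ * (Cx.b * Cx.P (p + 1))) := by
      rw [hk₁, Finset.sum_mul]
      apply Finset.sum_congr rfl
      intro p _
      calc (Cx.P (p + 1) * (h₁ * Cx.P p)) * Cx.b
          = Cx.P (p + 1) * (h₁ * (Cx.P p * Cx.b)) := by noncomm_ring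
      _ = Cx.P (p + 1) * (h₁ * (Cx.b * Cx.P (p + 1))) := by rw [Cx.Pb]
    have hF0 : Cx.P 0 * (h₁ * (Cx.b * Cx.P 0)) = 0 := by
      rw [show Cx.b * Cx.P 0 = 0 from Cx.b_bot, mul_zero, mul_zero]
    have hGn : Cx.P (n + 1) * (h₁ * (Cx.b * Cx.P (n + 1))) = 0 := by
      rw [Cx.P_bounded (n + 1) (by omega)]
      simp
    calc ∑ q ∈ Finset.range (n + 1), Cx.P q * ((h₁ * Cx.b) * Cx.P q)
        = ∑ q ∈ Finset.range (n + 1), Cx.P q * (h₁ * (Cx.b * Cx.P q)) :=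
          Finset.sum_congr rfl fun q _ => by noncomm_ring
    _ = (∑ i ∈ Finset.range n, Cx.P (i + 1) * (h₁ * (Cx.b * Cx.P (i + 1))))
          + Cx.P 0 * (h₁ * (Cx.b * Cx.P 0)) := Finset.sum_range_succ' _ n
    _ = ∑ i ∈ Finset.range n, Cx.P (i + 1) * (h₁ * (Cx.b * Cx.P (i + 1))) := by
          rw [hF0, add_zero]
    _ = ∑ p ∈ Finset.range (n + 1), Cx.P (p + 1) * (h₁ * (Cx.b * Cx.P (p + 1))) := by
          rw [Finset.sum_range_succ, hGn, add_zero]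
    _ = k₁ * Cx.b := rhs'.symm
  have hR1 : S * g = 1 + Cx.b * k₁ + k₁ * Cx.b := by
    have e1 : S * g = Cx.T * T'' := by
      calc S * g = Cx.T * ((U * Ub) * T'') := by rw [hg, hSU]; noncomm_ring
      _ = Cx.T * ((1 : H →L[ℂ] H) * T'') := by rw [hUUb]
      _ = Cx.T * T'' := by rw [one_mul]
    rw [e1, hΦTT']
    calc ∑ q ∈ Finset.range (n + 1), Cx.P q * ((Cx.T * T') * Cx.P q)
        = ∑ q ∈ Finset.range (n + 1),
            (Cx.P q * ((1 : H →L[ℂ] H) * Cx.P q)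
              + (Cx.P q * ((Cx.b * h₁) * Cx.P q) + Cx.P q * ((h₁ * Cx.b) * Cx.P q))) := by
          apply Finset.sum_congr rfl
          intro q _
          rw [hTT'op]
          noncomm_ring
    _ = 1 + (Cx.b * k₁ + k₁ * Cx.b) := by
          rw [Finset.sum_add_distrib, Finset.sum_add_distrib, hΦ1, hΦbh, hΦhb]
    _ = 1 + Cx.b * k₁ + k₁ * Cx.b := by abel
  -- R2
  have hT'Top : T' * Cx.T = 1 + (e * h₂ + h₂ * e) := by
    have h5 : T' * Cx.T - 1 = e * h₂ + h₂ * e := hTe2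
    exact eq_add_of_sub_eq' h5
  have hΦT'T : T'' * Cx.T = ∑ q ∈ Finset.range (n + 1), Cx.P q * ((T' * Cx.T) * Cx.P q) := by
    have step : T'' * Cx.T
        = ∑ q ∈ Finset.range (n + 1), Cx.P (n - q) * ((T' * Cx.T) * Cx.P (n - q)) := by
      rw [hT'', Finset.sum_mul]
      apply Finset.sum_congr rfl
      intro q hq
      have hq' : q ≤ n := by have := Finset.mem_range.mp hq; omega
      calc (Cx.P (n - q) * (T' * Cx.P q)) * Cx.T
          = Cx.P (n - q) * (T' * (Cx.P q * Cx.T)) := by noncomm_ring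
      _ = Cx.P (n - q) * (T' * (Cx.T * Cx.P (n - q))) := by rw [Cx.PT q hq']
      _ = Cx.P (n - q) * ((T' * Cx.T) * Cx.P (n - q)) := by noncomm_ring
    rw [step]
    have hrefl := Finset.sum_range_reflect
      (fun r => Cx.P r * ((T' * Cx.T) * Cx.P r)) (n + 1)
    simp only [Nat.add_sub_cancel] at hrefl
    exact hrefl
  have hek₂ : e * k₂ = ∑ p ∈ Finset.range (n + 1), Cx.P (p + 1) * ((e * h₂) * Cx.P (p + 1)) := by
    rw [hk₂, Finset.mul_sum]
    apply Finset.sum_congr rfl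
    intro p _
    calc e * (Cx.P p * (h₂ * Cx.P (p + 1))) = (e * Cx.P p) * (h₂ * Cx.P (p + 1)) := by
          rw [← mul_assoc]
    _ = (Cx.P (p + 1) * e) * (h₂ * Cx.P (p + 1)) := by rw [Cx.Pe]
    _ = Cx.P (p + 1) * ((e * h₂) * Cx.P (p + 1)) := by noncomm_ring
  have hk₂e : k₂ * e = ∑ p ∈ Finset.range (n + 1), Cx.P p * ((h₂ * e) * Cx.P p) := by
    rw [hk₂, Finset.sum_mul]
    apply Finset.sum_congr rfl
    intro p _
    calc (Cx.P p * (h₂ * Cx.P (p + 1))) * e = Cx.P p * (h₂ * (Cx.P (p + 1) * e)) := by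
          noncomm_ring
    _ = Cx.P p * (h₂ * (e * Cx.P p)) := by rw [(Cx.Pe p).symm]
    _ = Cx.P p * ((h₂ * e) * Cx.P p) := by noncomm_ring
  have hΦeh : ∑ q ∈ Finset.range (n + 1), Cx.P q * ((e * h₂) * Cx.P q) = e * k₂ := by
    have hF0 : Cx.P 0 * ((e * h₂) * Cx.P 0) = 0 := by
      rw [show Cx.P 0 * ((e * h₂) * Cx.P 0) = (Cx.P 0 * e) * (h₂ * Cx.P 0) from by noncomm_ring,
        Cx.P0e, zero_mul]
    have hGn : Cx.P (n + 1 + 1) * ((e * h₂) * Cx.P (n + 1 + 1)) = 0 := by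
      rw [Cx.P_bounded (n + 1 + 1) (by omega)]
      simp
    calc ∑ q ∈ Finset.range (n + 1), Cx.P q * ((e * h₂) * Cx.P q)
        = (∑ i ∈ Finset.range n, Cx.P (i + 1) * ((e * h₂) * Cx.P (i + 1)))
          + Cx.P 0 * ((e * h₂) * Cx.P 0) := Finset.sum_range_succ' _ n
    _ = ∑ i ∈ Finset.range n, Cx.P (i + 1) * ((e * h₂) * Cx.P (i + 1)) := by
          rw [hF0, add_zero]
    _ = ∑ p ∈ Finset.range (n + 1), Cx.P (p + 1) * ((e * h₂) * Cx.P (p + 1)) := by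
          rw [Finset.sum_range_succ]
          have hGn' : Cx.P (n + 1) * ((e * h₂) * Cx.P (n + 1)) = 0 := by
            rw [Cx.P_bounded (n + 1) (by omega)]
            simp
          rw [hGn', add_zero]
    _ = e * k₂ := hek₂.symm
  have hcome : ∀ r, (e * k₂) * Cx.P r = Cx.P r * (e * k₂) := by
    intro r
    rw [hek₂, Finset.sum_mul, Finset.mul_sum]
    exact Finset.sum_congr rfl fun p _ => hdiag (p + 1) (e * h₂) r
  have hcomk : ∀ r, (k₂ * e) * Cx.P r = Cx.P r * (k₂ * e) := by
    intro r
    rw [hk₂e, Finset.sum_mul, Finset.mul_sum]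
    exact Finset.sum_congr rfl fun p _ => hdiag p (h₂ * e) r
  have hR2 : g * S = 1 + e * k₂ + k₂ * e := by
    have e2 : T'' * Cx.T = 1 + (e * k₂ + k₂ * e) := by
      rw [hΦT'T]
      calc ∑ q ∈ Finset.range (n + 1), Cx.P q * ((T' * Cx.T) * Cx.P q)
          = ∑ q ∈ Finset.range (n + 1),
              (Cx.P q * ((1 : H →L[ℂ] H) * Cx.P q)
                + (Cx.P q * ((e * h₂) * Cx.P q) + Cx.P q * ((h₂ * e) * Cx.P q))) := by
            apply Finset.sum_congr rfl
            intro q _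
            rw [hT'Top]
            noncomm_ring
      _ = 1 + (e * k₂ + k₂ * e) := by
            rw [Finset.sum_add_distrib, Finset.sum_add_distrib, hΦ1, hΦeh, hk₂e.symm]
    have e1 : g * S = Ub * ((T'' * Cx.T) * U) := by
      rw [hg, hSU]
      noncomm_ring
    rw [e1, e2]
    calc Ub * ((1 + (e * k₂ + k₂ * e)) * U)
        = Ub * U + (Ub * ((e * k₂) * U) + Ub * ((k₂ * e) * U)) := by noncomm_ring
    _ = 1 + (e * k₂ + k₂ * e) := by rw [hUbU, hconj _ hcome, hconj _ hcomk]
    _ = 1 + e * k₂ + k₂ * e := by abel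
  -- assembly
  have hd : Cx.b * Cx.b = 0 := Cx.b_sq
  have hSsa : IsSelfAdjoint S := ContinuousLinearMap.isSelfAdjoint_iff'.mpr hSadj
  have hBsa : IsSelfAdjoint B := by
    rw [hB]
    have h5 : star (Cx.b + e) = Cx.b + e := by
      rw [star_add, ContinuousLinearMap.star_eq_adjoint, ContinuousLinearMap.star_eq_adjoint,
        he_def, ContinuousLinearMap.adjoint_adjoint]
      abel
    exact h5
  have hu1 : IsUnit (B + S) := by
    have h5 := HPCAux.main_abstract Cx.b S g k₁ k₂ hd hbS hSadj hR1 hR2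
    rw [hB]
    exact h5
  have hu2 : IsUnit (B - S) := by
    have hbS' : Cx.b * (-S) + (-S) * ContinuousLinearMap.adjoint Cx.b = 0 := by
      rw [mul_neg, neg_mul, ← neg_add]
      rw [show Cx.b * S + S * ContinuousLinearMap.adjoint Cx.b = 0 from hbS, neg_zero]
    have hSadj' : ContinuousLinearMap.adjoint (-S) = -S := by
      rw [← ContinuousLinearMap.star_eq_adjoint, star_neg,
        ContinuousLinearMap.star_eq_adjoint, hSadj]
    have hR1' : (-S) * (-g) = 1 + Cx.b * k₁ + k₁ * Cx.b := by rw [neg_mul_neg, hR1]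
    have hR2' : (-g) * (-S) = 1 + ContinuousLinearMap.adjoint Cx.b * k₂
        + k₂ * ContinuousLinearMap.adjoint Cx.b := by rw [neg_mul_neg, hR2]
    have h5 := HPCAux.main_abstract Cx.b (-S) (-g) k₁ k₂ hd hbS' hSadj' hR1' hR2'
    rw [hB, sub_eq_add_neg]
    exact h5
  exact ⟨hSsa, hbS, hBsa.add hSsa, hBsa.sub hSsa, hu1, hu2⟩
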